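/- arXiv:1606.04620 — 2 statements merged into one kernel-verified Lean document; each statement's English description precedes it below -/
import Mathlib

section
/- Let Ω ⊆ ℝ³ be open, let ε : ℝ → ℝ be continuously differentiable, let B : ℝ → ℝ be continuously differentiable, let ρ : Ω → ℝ be continuous, and let φ, ψ : Ω → ℝ be twice continuously differentiable and satisfy the Poisson–Boltzmann equation div(ε(φ) ∇ψ) − (φ − 1)² B'(ψ) = −ρ everywhere in Ω. Define the electrostatic stress tensor T_ele := ε(φ) ∇ψ ⊗ ∇ψ − [ (ε(φ)/2)|∇ψ|² + (φ − 1)² B(ψ) ] I₃. Then for every x ∈ Ω and i ∈ {1,2,3}, ∑_{j=1}^3 ∂_j (T_ele)_{ij}(x) = −ρ(x) ∂_i ψ(x) − [ (ε'(φ(x))/2)|∇ψ(x)|² + 2(φ(x) − 1) B(ψ(x)) ] ∂_i φ(x); equivalently, the force f_ele := [ −(ε'(φ)/2)|∇ψ|² − 2(φ − 1) B(ψ) ] ∇φ satisfies f_ele = div T_ele + ρ ∇ψ on Ω. -/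
open MeasureTheory Filter Topology

/-- The partial derivative `∂_i f` of a scalar field on `ℝ³`. -/
noncomputable def pd (f : EuclideanSpace ℝ (Fin 3) → ℝ) (i : Fin 3)
    (x : EuclideanSpace ℝ (Fin 3)) : ℝ :=
  fderiv ℝ f x (EuclideanSpace.single i 1)

/-- The electrostatic stress tensor
`T_ele = ε(φ) ∇ψ ⊗ ∇ψ − [ (ε(φ)/2)|∇ψ|² + (φ−1)² B(ψ) ] I₃`, entrywise. -/
noncomputable def Tele (ε B : ℝ → ℝ) (φ ψ : EuclideanSpace ℝ (Fin 3) → ℝ)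
    (i j : Fin 3) (x : EuclideanSpace ℝ (Fin 3)) : ℝ :=
  ε (φ x) * pd ψ i x * pd ψ j x
    - (ε (φ x) / 2 * ∑ l, (pd ψ l x) ^ 2 + (φ x - 1) ^ 2 * B (ψ x))
        * (if i = j then 1 else 0)

/-- if `div(ε(φ)∇ψ) − (φ−1)² B'(ψ) = −ρ` on `Ω`, then
`div T_ele = −ρ ∇ψ − [ (ε'(φ)/2)|∇ψ|² + 2(φ−1) B(ψ) ] ∇φ` pointwise on `Ω`;
equivalently `f_ele = div T_ele + ρ ∇ψ`. -/
theorem div_electrostatic_stress (Ω : Set (EuclideanSpace ℝ (Fin 3))) (hΩ : IsOpen Ω)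
    (ε B : ℝ → ℝ) (hε : ContDiff ℝ 1 ε) (hB : ContDiff ℝ 1 B)
    (ρ : EuclideanSpace ℝ (Fin 3) → ℝ) (hρ : ContinuousOn ρ Ω)
    (φ ψ : EuclideanSpace ℝ (Fin 3) → ℝ)
    (hφ : ContDiffOn ℝ 2 φ Ω) (hψ : ContDiffOn ℝ 2 ψ Ω)
    (hPB : ∀ x ∈ Ω,
      (∑ j, pd (fun y => ε (φ y) * pd ψ j y) j x) - (φ x - 1) ^ 2 * deriv B (ψ x)
        = -ρ x) :
    ∀ x ∈ Ω, ∀ i : Fin 3,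
      ∑ j, pd (Tele ε B φ ψ i j) j x
        = -ρ x * pd ψ i x
          - (deriv ε (φ x) / 2 * ∑ l, (pd ψ l x) ^ 2 + 2 * (φ x - 1) * B (ψ x))
              * pd φ i x := by
  intro x hx i
  have hmem := hΩ.mem_nhds hx
  have hφx : ContDiffAt ℝ 2 φ x := hφ.contDiffAt hmem
  have hψx : ContDiffAt ℝ 2 ψ x := hψ.contDiffAt hmem
  have hφd : HasFDerivAt φ (fderiv ℝ φ x) x :=
    (hφx.differentiableAt (by norm_num)).hasFDerivAt
  have hψd : HasFDerivAt ψ (fderiv ℝ ψ x) x :=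
    (hψx.differentiableAt (by norm_num)).hasFDerivAt
  have hψ1 : ContDiffAt ℝ 1 (fderiv ℝ ψ) x := hψx.fderiv_right (by norm_num)
  have hψ'd : HasFDerivAt (fderiv ℝ ψ) (fderiv ℝ (fderiv ℝ ψ) x) x :=
    (hψ1.differentiableAt (by norm_num)).hasFDerivAt
  have hsym : ∀ v w, fderiv ℝ (fderiv ℝ ψ) x v w = fderiv ℝ (fderiv ℝ ψ) x w v :=
    hψx.isSymmSndFDerivAt (by norm_num)
  have hεd : HasDerivAt ε (deriv ε (φ x)) (φ x) :=
    (hε.differentiable (by norm_num) (φ x)).hasDerivAt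
  have hA : HasFDerivAt (fun y => ε (φ y)) (deriv ε (φ x) • fderiv ℝ φ x) x :=
    hεd.comp_hasFDerivAt x hφd
  have hBd : HasDerivAt B (deriv B (ψ x)) (ψ x) :=
    (hB.differentiable (by norm_num) (ψ x)).hasDerivAt
  have hBψ : HasFDerivAt (fun y => B (ψ y)) (deriv B (ψ x) • fderiv ℝ ψ x) x :=
    hBd.comp_hasFDerivAt x hψd
  have hg : ∀ k : Fin 3, HasFDerivAt (fun y => pd ψ k y)
      ((fderiv ℝ ψ x).comp (0 : EuclideanSpace ℝ (Fin 3) →L[ℝ] EuclideanSpace ℝ (Fin 3))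
        + (fderiv ℝ (fderiv ℝ ψ) x).flip (EuclideanSpace.single k 1)) x :=
    fun k => hψ'd.clm_apply (hasFDerivAt_const _ x)
  have hsq : HasFDerivAt (fun y => (φ y - 1) ^ 2)
      ((φ x - 1) • fderiv ℝ φ x + (φ x - 1) • fderiv ℝ φ x) x := by
    simpa only [Pi.mul_def, ← pow_two, Pi.pow_def] using (hφd.sub_const 1).mul (hφd.sub_const 1)
  have hS : HasFDerivAt (fun y => ∑ l, (pd ψ l y) ^ 2)
      (∑ l, ((pd ψ l x) • ((fderiv ℝ ψ x).comp
            (0 : EuclideanSpace ℝ (Fin 3) →L[ℝ] EuclideanSpace ℝ (Fin 3))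
          + (fderiv ℝ (fderiv ℝ ψ) x).flip (EuclideanSpace.single l 1))
        + (pd ψ l x) • ((fderiv ℝ ψ x).comp
            (0 : EuclideanSpace ℝ (Fin 3) →L[ℝ] EuclideanSpace ℝ (Fin 3))
          + (fderiv ℝ (fderiv ℝ ψ) x).flip (EuclideanSpace.single l 1)))) x := by
    refine HasFDerivAt.fun_sum (fun l _ => ?_)
    simpa only [Pi.mul_def, ← pow_two, Pi.pow_def] using (hg l).mul (hg l)
  -- abbreviation for second derivative entries
  set H2 : Fin 3 → Fin 3 → ℝ := fun j k =>
    fderiv ℝ (fderiv ℝ ψ) x (EuclideanSpace.single j 1) (EuclideanSpace.single k 1) with hH2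
  -- divergence terms
  have hdiv : ∀ j : Fin 3, pd (fun y => ε (φ y) * pd ψ j y) j x
      = ε (φ x) * H2 j j + pd ψ j x * (deriv ε (φ x) * pd φ j x) := by
    intro j
    have hfd : fderiv ℝ (fun y => ε (φ y) * pd ψ j y) x = _ := (hA.mul (hg j)).fderiv
    show fderiv ℝ (fun y => ε (φ y) * pd ψ j y) x (EuclideanSpace.single j 1) = _
    rw [hfd]
    simp only [pd, hH2, ContinuousLinearMap.add_apply, ContinuousLinearMap.smul_apply,
      ContinuousLinearMap.comp_apply, ContinuousLinearMap.zero_apply, map_zero,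
      smul_eq_mul, ContinuousLinearMap.flip_apply, zero_add]
  -- value of each entry of div T
  have key : ∀ j : Fin 3, pd (Tele ε B φ ψ i j) j x
      = ε (φ x) * pd ψ i x * H2 j j
        + pd ψ j x * (ε (φ x) * H2 j i + pd ψ i x * (deriv ε (φ x) * pd φ j x))
        - (if i = j then 1 else 0) *
          (ε (φ x) * 2⁻¹ * (∑ l, (pd ψ l x * H2 j l + pd ψ l x * H2 j l))
            + (∑ l, (pd ψ l x) ^ 2) * (2⁻¹ * (deriv ε (φ x) * pd φ j x))
            + ((φ x - 1) ^ 2 * (deriv B (ψ x) * pd ψ j x)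
                + B (ψ x) * ((φ x - 1) * pd φ j x + (φ x - 1) * pd φ j x))) := by
    intro j
    have hD :=
      ((hA.mul (hg i)).mul (hg j)).sub
        ((((hA.mul_const ((2:ℝ)⁻¹)).mul hS).add (hsq.mul hBψ)).mul_const
          (if i = j then (1:ℝ) else 0))
    have hD' : HasFDerivAt (Tele ε B φ ψ i j) _ x := hD
    have hfd := hD'.fderiv
    simp only [pd, hfd, hH2, ContinuousLinearMap.add_apply, ContinuousLinearMap.sub_apply,
      ContinuousLinearMap.smul_apply, ContinuousLinearMap.comp_apply,
      ContinuousLinearMap.flip_apply, ContinuousLinearMap.zero_apply,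
      ContinuousLinearMap.coe_sum', Finset.sum_apply, smul_eq_mul, map_zero, zero_add, Pi.mul_apply]
  -- use the PB equation
  have hsum : ∑ j, (ε (φ x) * H2 j j + pd ψ j x * (deriv ε (φ x) * pd φ j x))
      = -ρ x + (φ x - 1) ^ 2 * deriv B (ψ x) := by
    have h := hPB x hx
    rw [Finset.sum_congr rfl (fun j _ => (hdiv j).symm)]
    linarith
  -- the sum over the Kronecker delta
  have hδ : ∀ F : Fin 3 → ℝ, (∑ j, (if i = j then (1:ℝ) else 0) * F j) = F i := by
    intro F
    simp [ite_mul]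
  -- assemble
  rw [Finset.sum_congr rfl (fun j _ => key j), Finset.sum_sub_distrib, hδ]
  have hsplit : ∀ j : Fin 3,
      ε (φ x) * pd ψ i x * H2 j j
        + pd ψ j x * (ε (φ x) * H2 j i + pd ψ i x * (deriv ε (φ x) * pd φ j x))
      = pd ψ i x * (ε (φ x) * H2 j j + pd ψ j x * (deriv ε (φ x) * pd φ j x))
        + ε (φ x) * (pd ψ j x * H2 i j) := by
    intro j
    have := hsym (EuclideanSpace.single j 1) (EuclideanSpace.single i 1)
    rw [hH2]
    simp only []
    rw [this]
    ring
  rw [Finset.sum_congr rfl (fun j _ => hsplit j), Finset.sum_add_distrib,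
    ← Finset.mul_sum, ← Finset.mul_sum, hsum]
  have hhalf : (∑ l, (pd ψ l x * H2 i l + pd ψ l x * H2 i l))
      = 2 * ∑ l, pd ψ l x * H2 i l := by
    rw [Finset.mul_sum]
    exact Finset.sum_congr rfl (fun l _ => by ring)
  rw [hhalf]
  ring
end

section
/- Let Ω ⊆ ℝ³ be open, let ε : ℝ → ℝ be continuously differentiable, let B : ℝ → ℝ be continuously differentiable, let ρ : Ω → ℝ be continuous, and let φ, ψ : Ω → ℝ be twice continuously differentiable and satisfy div(ε(φ) ∇ψ) − (φ − 1)² B'(ψ) = −ρ everywhere in Ω. Let V : Ω → ℝ³ be a continuously differentiable vector field with compact support in Ω. Define T_ele := ε(φ) ∇ψ ⊗ ∇ψ − [ (ε(φ)/2)|∇ψ|² + (φ − 1)² B(ψ) ] I₃. Then ∫_Ω [ −(ε'(φ)/2)|∇ψ|² − 2(φ − 1) B(ψ) ] (∇φ · V) dx = − ∫_Ω [ T_ele : ∇V − ρ (∇ψ · V) ] dx, where T_ele : ∇V := ∑_{i,j} (T_ele)_{ij} ∂_j V_i. -/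
open MeasureTheory Filter Topology

local notation "E3" => EuclideanSpace ℝ (Fin 3)

lemma glueContDiff {f : E3 → ℝ} {s K : Set E3} (hs : IsOpen s) (hK : IsClosed K)
    (hKs : K ⊆ s) (hf : ContDiffOn ℝ 1 f s) (h0 : ∀ x ∉ K, f x = 0) : ContDiff ℝ 1 f := by
  rw [← contDiffOn_univ]
  intro x _
  by_cases hx : x ∈ s
  · exact (hf.contDiffAt (hs.mem_nhds hx)).contDiffWithinAt
  · have hx' : x ∈ Kᶜ := fun h => hx (hKs h)
    have hev : f =ᶠ[𝓝 x] (fun _ => 0) :=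
      eventually_of_mem (hK.isOpen_compl.mem_nhds hx') (fun y hy => h0 y hy)
    exact ((contDiffAt_const (c := (0:ℝ))).congr_of_eventuallyEq hev).contDiffWithinAt

lemma glueCont {f : E3 → ℝ} {s K : Set E3} (hs : IsOpen s) (hK : IsClosed K)
    (hKs : K ⊆ s) (hf : ContinuousOn f s) (h0 : ∀ x ∉ K, f x = 0) : Continuous f := by
  rw [continuous_iff_continuousAt]
  intro x
  by_cases hx : x ∈ s
  · exact hf.continuousAt (hs.mem_nhds hx)
  · have hx' : x ∈ Kᶜ := fun h => hx (hKs h)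
    have hev : f =ᶠ[𝓝 x] (fun _ => 0) :=
      eventually_of_mem (hK.isOpen_compl.mem_nhds hx') (fun y hy => h0 y hy)
    exact ContinuousAt.congr (continuousAt_const) hev.symm

lemma integrable_fderiv_apply {g : E3 → ℝ} (hg : ContDiff ℝ 1 g)
    (hc : HasCompactSupport g) (v : E3) : Integrable (fun x => fderiv ℝ g x v) := by
  apply Continuous.integrable_of_hasCompactSupport
  · exact (ContinuousLinearMap.apply ℝ ℝ v).continuous.comp (hg.continuous_fderiv one_ne_zero)
  · exact (hc.fderiv ℝ).comp_left (g := fun L : E3 →L[ℝ] ℝ => L v) rfl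

lemma integral_fderiv_apply_zero {g : E3 → ℝ} (hg : ContDiff ℝ 1 g)
    (hc : HasCompactSupport g) (v : E3) : ∫ x, fderiv ℝ g x v = 0 := by
  have h := integral_mul_fderiv_eq_neg_fderiv_mul_of_integrable
    (μ := (volume : Measure E3)) (f := fun _ : E3 => (1:ℝ)) (g := g) (v := v)
    (by simpa using (integrable_zero E3 ℝ (volume : Measure E3)))
    (by simpa using integrable_fderiv_apply hg hc v)
    (by simpa using hg.continuous.integrable_of_hasCompactSupport hc)
    (fun x _ => (differentiable_const (1:ℝ)) x) (fun x _ => hg.differentiable one_ne_zero x)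
  simpa using h


set_option maxHeartbeats 2000000 in
/-- if `div(ε(φ)∇ψ) − (φ−1)² B'(ψ) = −ρ` on `Ω` then, for every compactly
supported C¹ vector field `V` on `Ω`,
`∫_Ω [−(ε'(φ)/2)|∇ψ|² − 2(φ−1)B(ψ)] (∇φ·V) dx = −∫_Ω [T_ele : ∇V − ρ (∇ψ·V)] dx`. -/
theorem electrostatic_stress_integration_by_parts
    (Ω : Set (EuclideanSpace ℝ (Fin 3))) (hΩ : IsOpen Ω)
    (ε B : ℝ → ℝ) (hε : ContDiff ℝ 1 ε) (hB : ContDiff ℝ 1 B)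
    (ρ : EuclideanSpace ℝ (Fin 3) → ℝ) (hρ : ContinuousOn ρ Ω)
    (φ ψ : EuclideanSpace ℝ (Fin 3) → ℝ)
    (hφ : ContDiffOn ℝ 2 φ Ω) (hψ : ContDiffOn ℝ 2 ψ Ω)
    (hPB : ∀ x ∈ Ω,
      (∑ j, pd (fun y => ε (φ y) * pd ψ j y) j x) - (φ x - 1) ^ 2 * deriv B (ψ x)
        = -ρ x)
    (V : EuclideanSpace ℝ (Fin 3) → EuclideanSpace ℝ (Fin 3))
    (hV : ContDiff ℝ 1 V) (hVcpt : HasCompactSupport V) (hVsupp : tsupport V ⊆ Ω) :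
    ∫ x in Ω, (-(deriv ε (φ x)) / 2 * (∑ l, (pd ψ l x) ^ 2)
          - 2 * (φ x - 1) * B (ψ x)) * (∑ i, pd φ i x * V x i)
      = -∫ x in Ω, ((∑ i, ∑ j, Tele ε B φ ψ i j x * pd (fun y => V y i) j x)
          - ρ x * (∑ i, pd ψ i x * V x i)) := by
  classical
  -- basic facts
  have hVz : ∀ y ∉ tsupport V, V y = 0 := fun y hy => image_eq_zero_of_notMem_tsupport hy
  have hKopen : IsOpen (tsupport V)ᶜ := (isClosed_tsupport V).isOpen_compl
  have hφ1 : ContDiffOn ℝ 1 φ Ω := hφ.of_le one_le_two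
  have hψ1 : ContDiffOn ℝ 1 ψ Ω := hψ.of_le one_le_two
  have hφd : ∀ y ∈ Ω, DifferentiableAt ℝ φ y := fun y hy =>
    (hφ1.differentiableOn one_ne_zero).differentiableAt (hΩ.mem_nhds hy)
  have hψd : ∀ y ∈ Ω, DifferentiableAt ℝ ψ y := fun y hy =>
    (hψ1.differentiableOn one_ne_zero).differentiableAt (hΩ.mem_nhds hy)
  have hψF : ContDiffOn ℝ 1 (fderiv ℝ ψ) Ω := hψ.fderiv_of_isOpen hΩ (by norm_num)
  have hφF : ContDiffOn ℝ 1 (fderiv ℝ φ) Ω := hφ.fderiv_of_isOpen hΩ (by norm_num)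
  have hψFd : ∀ y ∈ Ω, DifferentiableAt ℝ (fderiv ℝ ψ) y := fun y hy =>
    (hψF.differentiableOn one_ne_zero).differentiableAt (hΩ.mem_nhds hy)
  -- C¹ on Ω of the basic scalar fields
  have hACD : ContDiffOn ℝ 1 (fun y => ε (φ y)) Ω := hε.comp_contDiffOn hφ1
  have hBCD : ContDiffOn ℝ 1 (fun y => B (ψ y)) Ω := hB.comp_contDiffOn hψ1
  have hpdψC : ∀ l, ContDiffOn ℝ 1 (fun y => pd ψ l y) Ω := fun l =>
    (ContinuousLinearMap.apply ℝ ℝ (EuclideanSpace.single l (1:ℝ))).contDiff.comp_contDiffOn hψF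
  have hpdφC : ∀ l, ContDiffOn ℝ 1 (fun y => pd φ l y) Ω := fun l =>
    (ContinuousLinearMap.apply ℝ ℝ (EuclideanSpace.single l (1:ℝ))).contDiff.comp_contDiffOn hφF
  have hVC : ∀ i, ContDiff ℝ 1 (fun y => V y i) := fun i =>
    (EuclideanSpace.proj (𝕜 := ℝ) i).contDiff.comp hV
  have hQC : ContDiffOn ℝ 1 (fun y => ∑ l, (pd ψ l y) ^ 2) Ω :=
    ContDiffOn.sum fun l _ => (hpdψC l).pow 2
  have hTC : ∀ i j, ContDiffOn ℝ 1 (Tele ε B φ ψ i j) Ω := by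
    intro i j
    have : Tele ε B φ ψ i j = fun y =>
        ε (φ y) * pd ψ i y * pd ψ j y
          - (ε (φ y) / 2 * ∑ l, (pd ψ l y) ^ 2 + (φ y - 1) ^ 2 * B (ψ y))
              * (if i = j then 1 else 0) := rfl
    rw [this]
    exact ((hACD.mul (hpdψC i)).mul (hpdψC j)).sub
      ((((hACD.div_const 2).mul hQC).add
        (((hφ1.sub contDiffOn_const).pow 2).mul hBCD)).mul contDiffOn_const)
  -- global C¹ and compact support of the summands
  have hgC : ∀ i j, ContDiff ℝ 1 (fun y => Tele ε B φ ψ i j y * V y i) := fun i j =>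
    glueContDiff hΩ (isClosed_tsupport V) hVsupp
      ((hTC i j).mul (hVC i).contDiffOn)
      (fun y hy => by rw [hVz y hy]; simp)
  have hgcpt : ∀ i j, HasCompactSupport (fun y => Tele ε B φ ψ i j y * V y i) := fun i j =>
    HasCompactSupport.intro hVcpt (fun y hy => by rw [hVz y hy]; simp)
  -- the divergence integral vanishes
  have hzero : ∫ x, (∑ i, ∑ j,
      fderiv ℝ (fun y => Tele ε B φ ψ i j y * V y i) x (EuclideanSpace.single j 1)) = 0 := by
    rw [integral_finset_sum _ (fun i _ => integrable_finset_sum _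
      (fun j _ => integrable_fderiv_apply (hgC i j) (hgcpt i j) _))]
    refine Finset.sum_eq_zero fun i _ => ?_
    rw [integral_finset_sum _ (fun j _ => integrable_fderiv_apply (hgC i j) (hgcpt i j) _)]
    exact Finset.sum_eq_zero fun j _ => integral_fderiv_apply_zero (hgC i j) (hgcpt i j) _
  have hpdV0 : ∀ x ∉ tsupport V, ∀ i j, pd (fun y => V y i) j x = 0 := by
    intro x hxK i j
    have hev : (fun y => V y i) =ᶠ[𝓝 x] (fun _ => (0:ℝ)) :=
      eventually_of_mem (hKopen.mem_nhds hxK) (fun y hy => by simp [hVz y hy])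
    simp only [pd]
    rw [hev.fderiv_eq]
    simp
  -- the pointwise identity
  have hpoint : ∀ x, (∑ i, ∑ j,
      fderiv ℝ (fun y => Tele ε B φ ψ i j y * V y i) x (EuclideanSpace.single j 1))
      = ((-(deriv ε (φ x)) / 2 * (∑ l, (pd ψ l x) ^ 2)
          - 2 * (φ x - 1) * B (ψ x)) * (∑ i, pd φ i x * V x i))
        + (((∑ i, ∑ j, Tele ε B φ ψ i j x * pd (fun y => V y i) j x)
          - ρ x * (∑ i, pd ψ i x * V x i))) := by
    intro x
    by_cases hx : x ∈ Ω
    · -- main computation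
      have hD2 : HasFDerivAt (fderiv ℝ ψ) (fderiv ℝ (fderiv ℝ ψ) x) x := (hψFd x hx).hasFDerivAt
      have hFψ : ∀ l : Fin 3, HasFDerivAt (fun y => pd ψ l y)
          ((ContinuousLinearMap.apply ℝ ℝ (EuclideanSpace.single l (1:ℝ))).comp
            (fderiv ℝ (fderiv ℝ ψ) x)) x := fun l =>
        (ContinuousLinearMap.apply ℝ ℝ (EuclideanSpace.single l (1:ℝ))).hasFDerivAt.comp x hD2
      have hφx : HasFDerivAt φ (fderiv ℝ φ x) x := (hφd x hx).hasFDerivAt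
      have hA : HasFDerivAt (fun y => ε (φ y)) (deriv ε (φ x) • fderiv ℝ φ x) x :=
        ((hε.differentiable one_ne_zero (φ x)).hasDerivAt).comp_hasFDerivAt x hφx
      have hBψ : HasFDerivAt (fun y => B (ψ y)) (deriv B (ψ x) • fderiv ℝ ψ x) x :=
        ((hB.differentiable one_ne_zero (ψ x)).hasDerivAt).comp_hasFDerivAt x (hψd x hx).hasFDerivAt
      have hVF : ∀ i : Fin 3, HasFDerivAt (fun y => V y i)
          ((EuclideanSpace.proj (𝕜 := ℝ) i).comp (fderiv ℝ V x)) x := fun i =>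
        (EuclideanSpace.proj (𝕜 := ℝ) i).hasFDerivAt.comp x
          (hV.differentiable one_ne_zero x).hasFDerivAt
      have hVpd : ∀ i j : Fin 3, pd (fun y => V y i) j x
          = fderiv ℝ V x (EuclideanSpace.single j 1) i := by
        intro i j
        simp only [pd]
        rw [(hVF i).fderiv]
        simp
      have hsym : ∀ v w, fderiv ℝ (fderiv ℝ ψ) x v w = fderiv ℝ (fderiv ℝ ψ) x w v := by
        have hev : ∀ᶠ y in 𝓝 x, HasFDerivAt ψ (fderiv ℝ ψ y) y :=
          eventually_of_mem (hΩ.mem_nhds hx) (fun y hy => (hψd y hy).hasFDerivAt)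
        exact second_derivative_symmetric_of_eventually hev hD2
      have hkey : ∀ i j : Fin 3,
          fderiv ℝ (fun y => Tele ε B φ ψ i j y * V y i) x (EuclideanSpace.single j 1)
          = (deriv ε (φ x) * fderiv ℝ φ x (EuclideanSpace.single j 1)
                * fderiv ℝ ψ x (EuclideanSpace.single i 1) * fderiv ℝ ψ x (EuclideanSpace.single j 1)
              + ε (φ x) * fderiv ℝ (fderiv ℝ ψ) x (EuclideanSpace.single j 1) (EuclideanSpace.single i 1)
                * fderiv ℝ ψ x (EuclideanSpace.single j 1)
              + ε (φ x) * fderiv ℝ ψ x (EuclideanSpace.single i 1)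
                * fderiv ℝ (fderiv ℝ ψ) x (EuclideanSpace.single j 1) (EuclideanSpace.single j 1)
              - ((deriv ε (φ x) * fderiv ℝ φ x (EuclideanSpace.single j 1)
                    * (∑ l, fderiv ℝ ψ x (EuclideanSpace.single l 1) * fderiv ℝ ψ x (EuclideanSpace.single l 1))
                  + ε (φ x) * (∑ l, 2 * fderiv ℝ ψ x (EuclideanSpace.single l 1)
                      * fderiv ℝ (fderiv ℝ ψ) x (EuclideanSpace.single j 1) (EuclideanSpace.single l 1))) * (2:ℝ)⁻¹
                 + 2 * (φ x - 1) * fderiv ℝ φ x (EuclideanSpace.single j 1) * B (ψ x)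
                 + (φ x - 1) * (φ x - 1) * deriv B (ψ x) * fderiv ℝ ψ x (EuclideanSpace.single j 1))
                * (if i = j then 1 else 0)) * V x i
            + Tele ε B φ ψ i j x * fderiv ℝ V x (EuclideanSpace.single j 1) i := by
        intro i j
        have hfun : (fun y => Tele ε B φ ψ i j y * V y i) = (fun y =>
            (ε (φ y) * pd ψ i y * pd ψ j y -
              (ε (φ y) * (∑ l, pd ψ l y * pd ψ l y) * (2:ℝ)⁻¹
                + (φ y - 1) * (φ y - 1) * B (ψ y)) * (if i = j then 1 else 0)) * V y i) := by
          funext y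
          simp only [Tele, pow_two]
          ring
        rw [hfun]
        have H := ((((hA.mul (hFψ i)).mul (hFψ j)).sub
            ((((hA.mul (HasFDerivAt.sum fun l (_ : l ∈ Finset.univ) => (hFψ l).mul (hFψ l))).mul_const
                ((2:ℝ)⁻¹)).add
              (((hφx.sub_const (1:ℝ)).mul (hφx.sub_const (1:ℝ))).mul hBψ)).mul_const
                (if i = j then (1:ℝ) else 0))).mul (hVF i))
        erw [H.fderiv]
        simp only [Tele, pd, pow_two, ContinuousLinearMap.add_apply, ContinuousLinearMap.sub_apply,
          ContinuousLinearMap.smul_apply, ContinuousLinearMap.coe_smul', Pi.smul_apply,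
          ContinuousLinearMap.coe_comp', Function.comp_apply, ContinuousLinearMap.apply_apply,
          ContinuousLinearMap.coe_sum', Finset.sum_apply, smul_eq_mul,
          PiLp.proj_apply, Fin.sum_univ_three, Pi.mul_apply, Pi.sub_apply, Pi.add_apply]
        ring
      have hPBj : ∀ j : Fin 3, pd (fun y => ε (φ y) * pd ψ j y) j x
          = deriv ε (φ x) * fderiv ℝ φ x (EuclideanSpace.single j 1)
              * fderiv ℝ ψ x (EuclideanSpace.single j 1)
            + ε (φ x) * fderiv ℝ (fderiv ℝ ψ) x (EuclideanSpace.single j 1)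
                (EuclideanSpace.single j 1) := by
        intro j
        have H := hA.mul (hFψ j)
        rw [show pd (fun y => ε (φ y) * pd ψ j y) j x
          = fderiv ℝ (fun y => ε (φ y) * pd ψ j y) x (EuclideanSpace.single j 1) from rfl]
        erw [H.fderiv]
        simp only [pd, ContinuousLinearMap.add_apply, ContinuousLinearMap.smul_apply,
          ContinuousLinearMap.coe_smul', Pi.smul_apply, ContinuousLinearMap.coe_comp',
          Function.comp_apply, ContinuousLinearMap.apply_apply, smul_eq_mul]
        ring
      have hPB' := hPB x hx
      simp only [hPBj, Fin.sum_univ_three, pow_two] at hPB'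
      simp only [hkey, hVpd]
      simp only [pd, pow_two, Fin.sum_univ_three]
      have e01 : ((0:Fin 3) = 1) = False := by simp
      have e02 : ((0:Fin 3) = 2) = False := by simp
      have e10 : ((1:Fin 3) = 0) = False := by simp
      have e12 : ((1:Fin 3) = 2) = False := by simp
      have e20 : ((2:Fin 3) = 0) = False := by simp
      have e21 : ((2:Fin 3) = 1) = False := by simp
      simp only [e01, e02, e10, e12, e20, e21, if_false, if_true, eq_self_iff_true,
        mul_zero, zero_mul, mul_one, add_zero, zero_add]
      rw [hsym (EuclideanSpace.single 1 1) (EuclideanSpace.single 0 1),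
        hsym (EuclideanSpace.single 2 1) (EuclideanSpace.single 0 1),
        hsym (EuclideanSpace.single 2 1) (EuclideanSpace.single 1 1)]
      linear_combination (fderiv ℝ ψ x (EuclideanSpace.single 0 1) * V x 0
        + fderiv ℝ ψ x (EuclideanSpace.single 1 1) * V x 1
        + fderiv ℝ ψ x (EuclideanSpace.single 2 1) * V x 2) * hPB'
    · -- off Ω everything vanishes
      have hxK : x ∉ tsupport V := fun h => hx (hVsupp h)
      have h1 : ∀ i j : Fin 3,
          fderiv ℝ (fun y => Tele ε B φ ψ i j y * V y i) x (EuclideanSpace.single j 1) = 0 := by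
        intro i j
        have hev : (fun y => Tele ε B φ ψ i j y * V y i) =ᶠ[𝓝 x] (fun _ => (0:ℝ)) :=
          eventually_of_mem (hKopen.mem_nhds hxK) (fun y hy => by simp [hVz y hy])
        rw [hev.fderiv_eq]
        simp
      have hφsum : (∑ i, pd φ i x * V x i) = 0 := Finset.sum_eq_zero fun i _ => by
        simp [hVz x hxK]
      have hψsum : (∑ i, pd ψ i x * V x i) = 0 := Finset.sum_eq_zero fun i _ => by
        simp [hVz x hxK]
      have hTV : (∑ i, ∑ j, Tele ε B φ ψ i j x * pd (fun y => V y i) j x) = 0 :=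
        Finset.sum_eq_zero fun i _ => Finset.sum_eq_zero fun j _ => by
          rw [hpdV0 x hxK i j, mul_zero]
      simp [h1, hφsum, hψsum, hTV]
  -- integrability of the two integrands
  have hpdVCt : ∀ i j, Continuous (fun x => pd (fun y => V y i) j x) := fun i j =>
    (ContinuousLinearMap.apply ℝ ℝ (EuclideanSpace.single j (1:ℝ))).continuous.comp
      ((hVC i).continuous_fderiv one_ne_zero)
  have hLi : Integrable (fun x => (-(deriv ε (φ x)) / 2 * (∑ l, (pd ψ l x) ^ 2)
      - 2 * (φ x - 1) * B (ψ x)) * (∑ i, pd φ i x * V x i)) := by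
    have hvan : ∀ x ∉ tsupport V, (-(deriv ε (φ x)) / 2 * (∑ l, (pd ψ l x) ^ 2)
        - 2 * (φ x - 1) * B (ψ x)) * (∑ i, pd φ i x * V x i) = 0 := by
      intro x hxK
      rw [show (∑ i, pd φ i x * V x i) = 0 from Finset.sum_eq_zero fun i _ => by
        simp [hVz x hxK], mul_zero]
    have hcont : Continuous (fun x => (-(deriv ε (φ x)) / 2 * (∑ l, (pd ψ l x) ^ 2)
        - 2 * (φ x - 1) * B (ψ x)) * (∑ i, pd φ i x * V x i)) := by
      apply glueCont hΩ (isClosed_tsupport V) hVsupp _ hvan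
      refine ContinuousOn.mul (ContinuousOn.sub (ContinuousOn.mul ?_ ?_) ?_) ?_
      · exact (((hε.continuous_deriv le_rfl).comp_continuousOn hφ1.continuousOn).neg).div_const 2
      · exact continuousOn_finset_sum _ fun l _ => ((hpdψC l).continuousOn).pow 2
      · exact (continuousOn_const.mul (hφ1.continuousOn.sub continuousOn_const)).mul
          hBCD.continuousOn
      · exact continuousOn_finset_sum _ fun i _ =>
          ((hpdφC i).continuousOn).mul ((hVC i).continuous).continuousOn
    exact hcont.integrable_of_hasCompactSupport (HasCompactSupport.intro hVcpt hvan)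
  have hRi : Integrable (fun x => ((∑ i, ∑ j, Tele ε B φ ψ i j x * pd (fun y => V y i) j x)
      - ρ x * (∑ i, pd ψ i x * V x i))) := by
    have hvan : ∀ x ∉ tsupport V, ((∑ i, ∑ j, Tele ε B φ ψ i j x * pd (fun y => V y i) j x)
        - ρ x * (∑ i, pd ψ i x * V x i)) = 0 := by
      intro x hxK
      rw [show (∑ i, pd ψ i x * V x i) = 0 from Finset.sum_eq_zero fun i _ => by
        simp [hVz x hxK]]
      rw [show (∑ i, ∑ j, Tele ε B φ ψ i j x * pd (fun y => V y i) j x) = 0 from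
        Finset.sum_eq_zero fun i _ => Finset.sum_eq_zero fun j _ => by
          rw [hpdV0 x hxK i j, mul_zero]]
      simp
    have hcont : Continuous (fun x => ((∑ i, ∑ j, Tele ε B φ ψ i j x * pd (fun y => V y i) j x)
        - ρ x * (∑ i, pd ψ i x * V x i))) := by
      apply glueCont hΩ (isClosed_tsupport V) hVsupp _ hvan
      refine ContinuousOn.sub ?_ (hρ.mul ?_)
      · exact continuousOn_finset_sum _ fun i _ => continuousOn_finset_sum _ fun j _ =>
          ((hTC i j).continuousOn).mul (hpdVCt i j).continuousOn
      · exact continuousOn_finset_sum _ fun i _ =>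
          ((hpdψC i).continuousOn).mul ((hVC i).continuous).continuousOn
    exact hcont.integrable_of_hasCompactSupport (HasCompactSupport.intro hVcpt hvan)
  -- vanishing off Ω
  have hLvan : ∀ x ∉ Ω, (-(deriv ε (φ x)) / 2 * (∑ l, (pd ψ l x) ^ 2)
      - 2 * (φ x - 1) * B (ψ x)) * (∑ i, pd φ i x * V x i) = 0 := by
    intro x hx
    have hxK : x ∉ tsupport V := fun h => hx (hVsupp h)
    rw [show (∑ i, pd φ i x * V x i) = 0 from Finset.sum_eq_zero fun i _ => by
      rw [hVz x hxK]; simp]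
    simp
  have hRvan : ∀ x ∉ Ω, ((∑ i, ∑ j, Tele ε B φ ψ i j x * pd (fun y => V y i) j x)
      - ρ x * (∑ i, pd ψ i x * V x i)) = 0 := by
    intro x hx
    have hxK : x ∉ tsupport V := fun h => hx (hVsupp h)
    rw [show (∑ i, pd ψ i x * V x i) = 0 from Finset.sum_eq_zero fun i _ => by
      rw [hVz x hxK]; simp]
    simp [hpdV0 x hxK]
  -- assemble
  have hzero' : (∫ x, (-(deriv ε (φ x)) / 2 * (∑ l, (pd ψ l x) ^ 2)
      - 2 * (φ x - 1) * B (ψ x)) * (∑ i, pd φ i x * V x i))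
      + (∫ x, ((∑ i, ∑ j, Tele ε B φ ψ i j x * pd (fun y => V y i) j x)
      - ρ x * (∑ i, pd ψ i x * V x i))) = 0 := by
    rw [← integral_add hLi hRi]
    rw [← hzero]
    exact integral_congr_ae (Eventually.of_forall fun x => (hpoint x).symm)
  rw [setIntegral_eq_integral_of_forall_compl_eq_zero hLvan,
    setIntegral_eq_integral_of_forall_compl_eq_zero hRvan]
  linarith
end
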